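/- Let G = (V,E) be a finite simple graph, let a, b be two distinct non-adjacent vertices of G, and let (x_v)_{v∈V} be real numbers. Define L_G(x) = ∑_{uv∈E} x_u·x_v. Let G_a be the induced subgraph of G on V∖{b} with weights x^a given by x^a_a = x_a + x_b and x^a_v = x_v for v ≠ a, and let G_b be the induced subgraph on V∖{a} with weights x^b given by x^b_b = x_a + x_b and x^b_v = x_v for v ≠ b. Then (x_a + x_b)·L_G(x) = x_a·L_{G_a}(x^a) + x_b·L_{G_b}(x^b). -/

import Mathlib

open scoped Classical

/-- `L H y = ∑_{uv ∈ E(H)} y u * y v`, the sum over the unordered edges of `H`. -/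
noncomputable def L {W : Type*} [Fintype W] (H : SimpleGraph W) (y : W → ℝ) : ℝ :=
  ∑ e ∈ Finset.univ.filter (fun e : Sym2 W => e ∈ H.edgeSet),
    Sym2.lift ⟨fun u v => y u * y v, fun _ _ => mul_comm _ _⟩ e

/-- If `a, b` are distinct non-adjacent vertices of a finite simple graph `G` with vertex
weights `x`, `G_a` is the induced subgraph on `V \ {b}` with the weight of `a` replaced by
`x a + x b`, and `G_b` is the induced subgraph on `V \ {a}` with the weight of `b` replaced by
`x a + x b`, then `(x a + x b) * L G x = x a * L (G_a) x^a + x b * L (G_b) x^b`. -/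
lemma two_mul_L {W : Type*} [Fintype W] (H : SimpleGraph W) (y : W → ℝ) :
    (∑ u, ∑ v, if H.Adj u v then y u * y v else 0) = 2 * L H y := by
  classical
  rw [← Finset.sum_product']
  rw [show (∑ p ∈ Finset.univ ×ˢ Finset.univ, if H.Adj p.1 p.2 then y p.1 * y p.2 else 0)
      = ∑ p ∈ (Finset.univ ×ˢ Finset.univ).filter (fun p : W × W => H.Adj p.1 p.2),
          y p.1 * y p.2 from (Finset.sum_filter _ _).symm]
  rw [L, Finset.mul_sum]
  rw [← Finset.sum_fiberwise_of_maps_to (g := fun p : W × W => Sym2.mk p.1 p.2)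
      (t := Finset.univ.filter (fun e : Sym2 W => e ∈ H.edgeSet))
      (fun p hp => by
        simp only [Finset.mem_filter, Finset.mem_univ, Finset.mem_product, true_and,
          SimpleGraph.mem_edgeSet] at hp ⊢
        exact hp)]
  refine Finset.sum_congr rfl ?_
  intro e he
  simp only [Finset.mem_filter, Finset.mem_univ, true_and] at he
  induction e using Sym2.ind with
  | _ u v =>
    rw [SimpleGraph.mem_edgeSet] at he
    have huv : u ≠ v := H.ne_of_adj he
    have hfib : ((Finset.univ ×ˢ Finset.univ).filter (fun p : W × W => H.Adj p.1 p.2)).filter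
        (fun p => Sym2.mk p.1 p.2 = s(u, v)) = {(u, v), (v, u)} := by
      ext p
      obtain ⟨p1, p2⟩ := p
      simp only [Finset.mem_filter, Finset.mem_univ, Finset.mem_product, true_and,
        Finset.mem_insert, Finset.mem_singleton, Prod.mk.injEq]
      constructor
      · rintro ⟨_, h2⟩
        rw [Sym2.eq_iff] at h2
        rcases h2 with ⟨rfl, rfl⟩ | ⟨rfl, rfl⟩
        · left; exact ⟨rfl, rfl⟩
        · right; exact ⟨rfl, rfl⟩
      · rintro (⟨rfl, rfl⟩ | ⟨rfl, rfl⟩)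
        · exact ⟨he, rfl⟩
        · exact ⟨he.symm, Sym2.eq_swap⟩
    rw [hfib, Finset.sum_pair (by simp [huv, Prod.ext_iff])]
    simp [Sym2.lift_mk]
    ring

lemma erase_sum_eq {V : Type*} [Fintype V] [DecidableEq V] (c : V) (g : V → ℝ)
    (hg : g c = 0) : ∑ u ∈ Finset.univ.erase c, g u = ∑ u, g u := by
  refine Finset.sum_subset (Finset.subset_univ _) (fun u _ hu => ?_)
  have : u = c := by
    by_contra hne
    exact hu (Finset.mem_erase.mpr ⟨hne, Finset.mem_univ u⟩)
  rw [this, hg]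

lemma subtype_sum_eq {V : Type*} [Fintype V] [DecidableEq V] (c : V) (g : V → ℝ) :
    (∑ u : {v : V | v ≠ c}, g ↑u) = ∑ u ∈ Finset.univ.erase c, g u := by
  exact (Finset.sum_subtype (Finset.univ.erase c) (by intro x; simp [Set.mem_setOf_eq]) g).symm

lemma subtype_DS {V : Type*} [Fintype V] [DecidableEq V] (G : SimpleGraph V) (c : V)
    (w : V → ℝ) (hw : w c = 0) :
    (∑ u : {v : V | v ≠ c}, ∑ v : {v : V | v ≠ c},
        if (G.induce {v : V | v ≠ c}).Adj u v then w ↑u * w ↑v else 0)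
      = ∑ u, ∑ v, if G.Adj u v then w u * w v else 0 := by
  have key : (∑ u : {v : V | v ≠ c}, ∑ v : {v : V | v ≠ c},
        if (G.induce {v : V | v ≠ c}).Adj u v then w ↑u * w ↑v else 0)
      = ∑ u ∈ Finset.univ.erase c, ∑ v ∈ Finset.univ.erase c,
          if G.Adj u v then w u * w v else 0 := by
    have step : ∀ u : {v : V | v ≠ c},
        (∑ v : {v : V | v ≠ c}, if (G.induce {v : V | v ≠ c}).Adj u v then w ↑u * w ↑v else 0)
          = ∑ v ∈ Finset.univ.erase c, if G.Adj ↑u v then w ↑u * w v else 0 := by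
      intro u
      rw [← subtype_sum_eq c (fun v => if G.Adj ↑u v then w ↑u * w v else 0)]
      refine Finset.sum_congr rfl fun v _ => ?_
      congr 1
    rw [Finset.sum_congr rfl (fun u _ => step u)]
    exact subtype_sum_eq c (fun u => ∑ v ∈ Finset.univ.erase c,
      if G.Adj u v then w u * w v else 0)
  rw [key]
  rw [erase_sum_eq c _ (by simp [hw])]
  refine Finset.sum_congr rfl fun u _ => ?_
  exact erase_sum_eq c _ (by simp [hw])

theorem stmt_2 {V : Type*} [Fintype V] [DecidableEq V] (G : SimpleGraph V)
    (a b : V) (hab : a ≠ b) (hnadj : ¬ G.Adj a b) (x : V → ℝ) :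
    (x a + x b) * L G x
      = x a * L (G.induce {v | v ≠ b}) (fun v => if (v : V) = a then x a + x b else x v)
        + x b * L (G.induce {v | v ≠ a}) (fun v => if (v : V) = b then x a + x b else x v) := by
  set wA : V → ℝ := fun v => if v = b then 0 else if v = a then x a + x b else x v with hwA
  set wB : V → ℝ := fun v => if v = a then 0 else if v = b then x a + x b else x v with hwB
  have hLA : 2 * L (G.induce {v | v ≠ b}) (fun v => if (v : V) = a then x a + x b else x v)
      = ∑ u, ∑ v, if G.Adj u v then wA u * wA v else 0 := by
    rw [← two_mul_L, ← subtype_DS G b wA (by simp [hwA])]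
    refine Finset.sum_congr rfl fun u _ => Finset.sum_congr rfl fun v _ => ?_
    have hu : (u : V) ≠ b := u.2
    have hv : (v : V) ≠ b := v.2
    simp only [hwA, if_neg hu, if_neg hv]
    congr
  have hLB : 2 * L (G.induce {v | v ≠ a}) (fun v => if (v : V) = b then x a + x b else x v)
      = ∑ u, ∑ v, if G.Adj u v then wB u * wB v else 0 := by
    rw [← two_mul_L, ← subtype_DS G a wB (by simp [hwB])]
    refine Finset.sum_congr rfl fun u _ => Finset.sum_congr rfl fun v _ => ?_
    have hu : (u : V) ≠ a := u.2
    have hv : (v : V) ≠ a := v.2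
    simp only [hwB, if_neg hu, if_neg hv]
    congr
  have hptwise : ∀ u v : V, (x a + x b) * (if G.Adj u v then x u * x v else 0)
      = x a * (if G.Adj u v then wA u * wA v else 0)
        + x b * (if G.Adj u v then wB u * wB v else 0) := by
    intro u v
    by_cases h : G.Adj u v
    · have hne : u ≠ v := G.ne_of_adj h
      have h1 : ¬(u = a ∧ v = b) := fun ⟨e1, e2⟩ => hnadj (e1 ▸ e2 ▸ h)
      have h2 : ¬(u = b ∧ v = a) := fun ⟨e1, e2⟩ => hnadj (G.adj_symm (e1 ▸ e2 ▸ h))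
      simp only [if_pos h, hwA, hwB]
      split_ifs <;> subst_vars <;>
        first
          | ring1
          | exact absurd rfl hne
          | exact absurd rfl hab
          | exact absurd h hnadj
          | exact absurd h.symm hnadj
          | exact absurd ⟨rfl, rfl⟩ h1
          | exact absurd ⟨rfl, rfl⟩ h2
          | simp_all
    · simp [h]
  have key : (x a + x b) * (∑ u, ∑ v, if G.Adj u v then x u * x v else 0)
      = x a * (∑ u, ∑ v, if G.Adj u v then wA u * wA v else 0)
        + x b * (∑ u, ∑ v, if G.Adj u v then wB u * wB v else 0) := by
    simp only [Finset.mul_sum]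
    rw [← Finset.sum_add_distrib]
    refine Finset.sum_congr rfl fun u _ => ?_
    rw [← Finset.sum_add_distrib]
    refine Finset.sum_congr rfl fun v _ => hptwise u v
  rw [two_mul_L G x] at key
  rw [← hLA, ← hLB] at key
  linarith
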